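/- (Lemma 1, unbiasedness of the influence function) Under the stated setup and the conditional-moment restriction, the influence function has mean zero at the true parameter: E[g(β₀)] = E[ (W − E[W | 𝒢]) · (R_A·R_T − β₀·R_A² − E[R_A·R_T − β₀·R_A² | 𝒢]) ] = 0. -/

import Mathlib

open MeasureTheory

private lemma memℒp_two_condexp' {α : Type*} {m m0 : MeasurableSpace α} (hm : m ≤ m0)
    {μ : Measure α} [IsFiniteMeasure μ] {f : α → ℝ} (hf : MemLp f 2 μ) :
    MemLp (μ[f|m]) 2 μ := by
  have hfi : Integrable f μ := hf.integrable one_le_two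
  have hcond : ((condExpL2 ℝ ℝ hm (hf.toLp f) : Lp ℝ 2 μ) : α → ℝ) =ᵐ[μ] μ[f|m] := by
    refine ae_eq_condExp_of_forall_setIntegral_eq hm hfi
      (fun s hs hμs => integrableOn_condExpL2_of_measure_ne_top hm hμs.ne _)
      (fun s hs hμs => ?_) (aestronglyMeasurable_condExpL2 hm _)
    rw [integral_condExpL2_eq hm (hf.toLp f) hs hμs.ne]
    exact setIntegral_congr_ae (hm s hs) ((hf.coeFn_toLp).mono fun x hx _ => hx)
  exact (Lp.memLp ((condExpL2 ℝ ℝ hm (hf.toLp f) : Lp ℝ 2 μ))).ae_eq hcond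

private lemma integrable_mul_of_memℒp_two' {α : Type*} {m0 : MeasurableSpace α}
    {μ : Measure α} {f g : α → ℝ} (hf : MemLp f 2 μ) (hg : MemLp g 2 μ) :
    Integrable (fun x => f x * g x) μ := by
  have h : MemLp (f • g) 1 μ := by
    exact hg.smul hf
  exact memLp_one_iff_integrable.mp h

/-- **Lemma 1 (unbiasedness of the influence function).** Under the setup and the
conditional-moment restriction `E[R_A (T − β₀ A) | ℋ] = E[R_A (T − β₀ A) | 𝒢]` a.s.,
the influence function has mean zero at the true parameter: `E[g(β₀)] = 0`. -/
theorem influence_function_unbiased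
    {Ω : Type*} {m0 : MeasurableSpace Ω} (P : Measure Ω) [IsProbabilityMeasure P]
    (𝒢 ℋ : MeasurableSpace Ω) (h𝒢ℋ : 𝒢 ≤ ℋ) (hℋm0 : ℋ ≤ m0)
    (A T W : Ω → ℝ) (hA4 : MemLp A 4 P) (hT4 : MemLp T 4 P)
    (CW : ℝ) (hWbd : ∀ ω, |W ω| ≤ CW) (hWmeas : Measurable[ℋ] W)
    (RW RA RT : Ω → ℝ)
    (hRW : RW = fun ω => W ω - (P[W|𝒢]) ω)
    (hRA : RA = fun ω => A ω - (P[A|ℋ]) ω)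
    (hRT : RT = fun ω => T ω - (P[T|ℋ]) ω)
    (g : ℝ → Ω → ℝ)
    (hg : ∀ β, g β = fun ω =>
      RW ω * (RA ω * RT ω - β * RA ω ^ 2
        - (P[fun ω' => RA ω' * RT ω' - β * RA ω' ^ 2|𝒢]) ω))
    (β₀ : ℝ)
    (hCMR : P[fun ω => RA ω * (T ω - β₀ * A ω)|ℋ]
      =ᵐ[P] P[fun ω => RA ω * (T ω - β₀ * A ω)|𝒢]) :
    ∫ ω, g β₀ ω ∂P = 0 := by
  have h𝒢m0 : 𝒢 ≤ m0 := h𝒢ℋ.trans hℋm0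
  -- basic MemLp facts
  have hA2 : MemLp A 2 P := hA4.mono_exponent (by norm_num)
  have hT2 : MemLp T 2 P := hT4.mono_exponent (by norm_num)
  have hcA2 : MemLp (P[A|ℋ]) 2 P := memℒp_two_condexp' hℋm0 hA2
  have hcT2 : MemLp (P[T|ℋ]) 2 P := memℒp_two_condexp' hℋm0 hT2
  have hRA2 : MemLp RA 2 P := by rw [hRA]; exact hA2.sub hcA2
  have hRT2 : MemLp RT 2 P := by rw [hRT]; exact hT2.sub hcT2
  have hS2 : MemLp (fun ω => T ω - β₀ * A ω) 2 P := hT2.sub (hA2.const_mul β₀)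
  set V : Ω → ℝ := fun ω => (P[T|ℋ]) ω - β₀ * (P[A|ℋ]) ω with hV
  have hV2 : MemLp V 2 P := hcT2.sub (hcA2.const_mul β₀)
  set U : Ω → ℝ := fun ω => RA ω * RT ω - β₀ * RA ω ^ 2 with hU
  -- integrabilities
  have hRA_int : Integrable RA P := hRA2.integrable one_le_two
  have hU_int : Integrable U P := by
    have h1 := integrable_mul_of_memℒp_two' hRA2 hRT2
    have h2 := (integrable_mul_of_memℒp_two' hRA2 hRA2).const_mul β₀
    refine (h1.sub h2).congr (Filter.Eventually.of_forall fun ω => ?_)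
    simp [hU, sq]
  have hRAS_int : Integrable (fun ω => RA ω * (T ω - β₀ * A ω)) P :=
    integrable_mul_of_memℒp_two' hRA2 hS2
  have hVRA_int : Integrable (fun ω => V ω * RA ω) P :=
    integrable_mul_of_memℒp_two' hV2 hRA2
  -- E[RA | ℋ] = 0
  have hERA0 : P[RA|ℋ] =ᵐ[P] 0 := by
    have h1 : P[RA|ℋ] =ᵐ[P] P[A|ℋ] - P[P[A|ℋ]|ℋ] := by
      rw [hRA]
      exact condExp_sub (hA2.integrable one_le_two) integrable_condExp _
    have h2 : P[P[A|ℋ]|ℋ] = P[A|ℋ] :=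
      condExp_of_stronglyMeasurable hℋm0 stronglyMeasurable_condExp integrable_condExp
    refine h1.trans ?_
    rw [h2]
    filter_upwards with ω
    simp
  -- E[V * RA | ℋ] = 0
  have hVsm : StronglyMeasurable[ℋ] V :=
    stronglyMeasurable_condExp.sub (stronglyMeasurable_condExp.const_mul β₀)
  have hEVRA0 : P[fun ω => V ω * RA ω|ℋ] =ᵐ[P] 0 := by
    have h1 : P[V * RA|ℋ] =ᵐ[P] V * P[RA|ℋ] :=
      condExp_mul_of_stronglyMeasurable_left hVsm hVRA_int hRA_int
    refine h1.trans ?_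
    filter_upwards [hERA0] with ω hω
    simp [Pi.mul_apply, hω]
  -- decompose U
  have hU_eq : U = (fun ω => RA ω * (T ω - β₀ * A ω)) - (fun ω => V ω * RA ω) := by
    funext ω
    simp only [hU, hV, Pi.sub_apply, hRA, hRT]
    ring
  set K : Ω → ℝ := P[fun ω => RA ω * (T ω - β₀ * A ω)|𝒢] with hK
  -- E[U | ℋ] = K
  have hEUH : P[U|ℋ] =ᵐ[P] K := by
    have h1 : P[U|ℋ] =ᵐ[P]
        P[fun ω => RA ω * (T ω - β₀ * A ω)|ℋ] - P[fun ω => V ω * RA ω|ℋ] := by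
      rw [hU_eq]
      exact condExp_sub hRAS_int hVRA_int _
    refine h1.trans ?_
    filter_upwards [hCMR, hEVRA0] with ω h1 h2
    simp only [Pi.sub_apply, h1, h2, Pi.zero_apply, sub_zero, hK]
  -- E[U | 𝒢] = K as well
  have hEUG : P[U|𝒢] =ᵐ[P] K := by
    have h1 : P[P[U|ℋ]|𝒢] =ᵐ[P] P[U|𝒢] := condExp_condExp_of_le h𝒢ℋ hℋm0
    have h2 : P[P[U|ℋ]|𝒢] =ᵐ[P] P[K|𝒢] := condExp_congr_ae hEUH
    have h3 : P[K|𝒢] = K :=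
      condExp_of_stronglyMeasurable h𝒢m0 stronglyMeasurable_condExp integrable_condExp
    exact h1.symm.trans (h2.trans (by rw [h3]))
  have hEq : P[U|𝒢] =ᵐ[P] P[U|ℋ] := hEUG.trans hEUH.symm
  -- RW is ℋ-measurable and a.e. bounded
  have hRWsm : StronglyMeasurable[ℋ] RW := by
    rw [hRW]
    exact hWmeas.stronglyMeasurable.sub (stronglyMeasurable_condExp.mono h𝒢ℋ)
  have hCW0 : 0 ≤ CW := by
    rcases isEmpty_or_nonempty Ω with h | ⟨⟨ω⟩⟩
    · exfalso
      have h1 : P Set.univ = 1 := measure_univ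
      rw [Set.univ_eq_empty_iff.mpr h, measure_empty] at h1
      exact zero_ne_one h1
    · exact (abs_nonneg _).trans (hWbd ω)
  have hcWbd : ∀ᵐ ω ∂P, |(P[W|𝒢]) ω| ≤ (⟨CW, hCW0⟩ : NNReal) := by
    refine ae_bdd_condExp_of_ae_bdd ?_
    exact Filter.Eventually.of_forall fun ω => hWbd ω
  have hRWbd : ∀ᵐ ω ∂P, ‖RW ω‖ ≤ CW + CW := by
    filter_upwards [hcWbd] with ω hω
    rw [hRW, Real.norm_eq_abs]
    exact (abs_sub _ _).trans (add_le_add (hWbd ω) hω)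
  have hD_int : Integrable (fun ω => U ω - (P[U|ℋ]) ω) P :=
    hU_int.sub integrable_condExp
  have hF_int : Integrable (fun ω => RW ω * (U ω - (P[U|ℋ]) ω)) P :=
    hD_int.bdd_mul (hRWsm.mono hℋm0).aestronglyMeasurable hRWbd
  -- rewrite g β₀ a.e.
  have hg_eq : g β₀ =ᵐ[P] fun ω => RW ω * (U ω - (P[U|ℋ]) ω) := by
    rw [hg β₀]
    filter_upwards [hEq] with ω hω
    rw [hω]
  -- conditional expectation of F is zero
  have hEF0 : P[fun ω => RW ω * (U ω - (P[U|ℋ]) ω)|ℋ] =ᵐ[P] 0 := by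
    have h1 : P[RW * (U - P[U|ℋ])|ℋ] =ᵐ[P] RW * P[U - P[U|ℋ]|ℋ] :=
      condExp_mul_of_stronglyMeasurable_left hRWsm hF_int hD_int
    have h2 : P[U - P[U|ℋ]|ℋ] =ᵐ[P] 0 := by
      have h3 : P[U - P[U|ℋ]|ℋ] =ᵐ[P] P[U|ℋ] - P[P[U|ℋ]|ℋ] :=
        condExp_sub hU_int integrable_condExp _
      refine h3.trans ?_
      rw [condExp_of_stronglyMeasurable hℋm0 stronglyMeasurable_condExp integrable_condExp]
      filter_upwards with ω
      simp
    refine h1.trans ?_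
    filter_upwards [h2] with ω hω
    simp [Pi.mul_apply, hω]
  calc ∫ ω, g β₀ ω ∂P = ∫ ω, RW ω * (U ω - (P[U|ℋ]) ω) ∂P := integral_congr_ae hg_eq
    _ = ∫ ω, (P[fun ω => RW ω * (U ω - (P[U|ℋ]) ω)|ℋ]) ω ∂P :=
        (integral_condExp hℋm0).symm
    _ = 0 := by
        rw [integral_congr_ae hEF0]
        simp
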